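/- Let q be an odd prime power and C, D, E ∈ F_q with C³ + D³ + E³ - 3CDE = 1/2. Then the trinomial f(X) = EX² + CX^{2q} + DX^{2q²} is planar on F_{q³}. -/

import Mathlib

private lemma charP_of_card_pow (F : Type) [Field F] [Fintype F] (p m : ℕ) (hp : p.Prime)
    (hm : 0 < m) (hc : Fintype.card F = p ^ m) : CharP F p := by
  haveI : CharP F (ringChar F) := ringChar.charP F
  obtain ⟨k, hrk, hck⟩ := FiniteField.card F (ringChar F)
  have hdvd : ringChar F ∣ p ^ m := by
    rw [← hc, hck]
    exact dvd_pow_self _ k.pos.ne'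
  have : ringChar F = p := (Nat.prime_dvd_prime_iff_eq hrk hp).mp (hrk.dvd_of_dvd_pow hdvd)
  rwa [← this]

theorem stmt6 (q : ℕ) (hodd : Odd q) (hpp : ∃ p n : ℕ, Nat.Prime p ∧ 0 < n ∧ q = p ^ n)
    (K L : Type) [Field K] [Field L] [Fintype K] [Fintype L] [Algebra K L]
    (hK : Fintype.card K = q) (hL : Fintype.card L = q ^ 3)
    (C D E : K) (h : C ^ 3 + D ^ 3 + E ^ 3 - 3 * C * D * E = 1 / 2) (f : L → L)
    (hf : ∀ x : L, f x = algebraMap K L E * x ^ 2 + algebraMap K L C * x ^ (2 * q)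
        + algebraMap K L D * x ^ (2 * q ^ 2)) :
    ∀ ε : L, ε ≠ 0 → Function.Bijective (fun x : L => f (x + ε) - f x) := by
  obtain ⟨p, n, hp, hn, hq⟩ := hpp
  haveI : Fact p.Prime := ⟨hp⟩
  have hpodd : p ≠ 2 := by
    rintro rfl
    exact (Nat.not_even_iff_odd.mpr hodd) (hq ▸ (Nat.even_pow.mpr ⟨even_two, hn.ne'⟩))
  haveI hcK : CharP K p := charP_of_card_pow K p n hp hn (hK.trans hq)
  haveI hcL : CharP L p := charP_of_card_pow L p (n * 3) hp (by positivity)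
    (by rw [hL, hq, ← pow_mul])
  have h2K : (2 : K) ≠ 0 := by
    rw [show (2 : K) = ((2 : ℕ) : K) by norm_num, Ne, CharP.cast_eq_zero_iff K p]
    exact fun hd => hpodd ((Nat.prime_dvd_prime_iff_eq hp Nat.prime_two).mp hd)
  have h2L : (2 : L) ≠ 0 := by
    rw [show (2 : L) = ((2 : ℕ) : L) by norm_num, Ne, CharP.cast_eq_zero_iff L p]
    exact fun hd => hpodd ((Nat.prime_dvd_prime_iff_eq hp Nat.prime_two).mp hd)
  -- Frobenius facts
  have hfrob : ∀ a b : L, (a + b) ^ q = a ^ q + b ^ q := by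
    intro a b; rw [hq]; exact add_pow_char_pow a b p n
  have hsub : ∀ a b : L, (a - b) ^ q = a ^ q - b ^ q := by
    intro a b; rw [hq]; exact sub_pow_char_pow a b n
  have hq3 : ∀ a : L, ((a ^ q) ^ q) ^ q = a := by
    intro a
    rw [← pow_mul, ← pow_mul, show q * (q * q) = q ^ 3 by ring, ← hL]
    exact FiniteField.pow_card a
  set c := algebraMap K L C with hc
  set d := algebraMap K L D with hd
  set e := algebraMap K L E with he
  have hfix : ∀ z : K, (algebraMap K L z) ^ q = algebraMap K L z := by
    intro z
    rw [← map_pow, ← hK, FiniteField.pow_card]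
  -- determinant equation in L
  have hdet2 : 2 * (c ^ 3 + d ^ 3 + e ^ 3 - 3 * c * d * e) = 1 := by
    have hK2 : 2 * (C ^ 3 + D ^ 3 + E ^ 3 - 3 * C * D * E) = 1 := by
      rw [h]; field_simp
    have := congrArg (algebraMap K L) hK2
    push_cast at this
    simpa [map_mul, map_add, map_sub, map_pow, map_ofNat] using this
  intro ε hε
  rw [← Finite.injective_iff_bijective]
  intro x y hxy
  simp only [hf] at hxy
  -- rewrite the exponents
  have hpw : ∀ a : L, a ^ (2 * q) = (a ^ 2) ^ q := by
    intro a; rw [← pow_mul]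
  have hpw2 : ∀ a : L, a ^ (2 * q ^ 2) = ((a ^ 2) ^ q) ^ q := by
    intro a; rw [← pow_mul, ← pow_mul]; ring_nf
  simp only [hpw, hpw2] at hxy
  have key : ∀ w : L, (w + ε) ^ 2 = w ^ 2 + (2 * ε * w + ε ^ 2) := by intro w; ring
  simp only [key, hfrob] at hxy
  -- hxy is now linear; extract the linearized-equality
  have eq1 : e * (2 * ε * (x - y)) + c * (2 * ε * (x - y)) ^ q
      + d * ((2 * ε * (x - y)) ^ q) ^ q = 0 := by
    have hs1 : (2 * ε * (x - y)) ^ q = (2 * ε * x) ^ q - (2 * ε * y) ^ q := by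
      rw [← hsub]; ring_nf
    have hs2 : ((2 * ε * (x - y)) ^ q) ^ q = ((2 * ε * x) ^ q) ^ q - ((2 * ε * y) ^ q) ^ q := by
      rw [hs1, hsub]
    rw [hs2, hs1]
    linear_combination hxy
  set A := 2 * ε * (x - y) with hA
  set B := A ^ q with hB
  set G := B ^ q with hG
  -- apply Frobenius to eq1 twice
  have hq0 : q ≠ 0 := hodd.pos.ne'
  have eq2 : d * A + e * B + c * G = 0 := by
    have := congrArg (· ^ q) eq1
    simp only [hfrob, mul_pow, hd, hc, he, hfix] at this
    rw [← hd, ← hc, ← he, hG, hB, hq3 A] at this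
    rw [← hB, ← hG, zero_pow hq0] at this
    linear_combination this
  have eq3 : c * A + d * B + e * G = 0 := by
    have := congrArg (· ^ q) eq2
    simp only [hfrob, mul_pow, hd, hc, he, hfix] at this
    rw [← hd, ← hc, ← he, hG, hB, hq3 A] at this
    rw [← hB, ← hG, zero_pow hq0] at this
    linear_combination this
  have hA0 : A = 0 := by
    linear_combination 2 * (e ^ 2 - c * d) * eq1 + 2 * (d ^ 2 - c * e) * eq2
      + 2 * (c ^ 2 - d * e) * eq3 - A * hdet2
  rw [hA, mul_eq_zero, mul_eq_zero] at hA0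
  rcases hA0 with (h' | h') | h'
  · exact absurd h' h2L
  · exact absurd h' hε
  · exact sub_eq_zero.mp h'
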